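/- Let I ⊂ ℂ[x_1,...,x_n] be the ideal generated by symmetric polynomials with zero constant term, and define the linear operator Δ on monomials by Δ(x^γ) = (Σ_{i=1}^n (n-i-γ_i)x_i)·x^γ, extended to satisfy the Leibniz rule Δ(fg) = fΔ(g) + gΔ(f). Then Δ maps I into I, i.e., Δ descends to a well-defined operator on the coinvariant algebra ℂ[x_1,...,x_n]/I. -/

import Mathlib

open MvPolynomial Finset
open scoped Classical

/-- The ideal of `ℂ[x₁,…,xₙ]` generated by the symmetric polynomials with zero
constant term (so that the quotient is the coinvariant algebra). -/
noncomputable def coinvIdeal (n : ℕ) : Ideal (MvPolynomial (Fin n) ℂ) :=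
  Ideal.span {q : MvPolynomial (Fin n) ℂ | q.IsSymmetric ∧ constantCoeff q = 0}

/-- The derivation `T f = ∑ xᵢ² ∂ᵢ f`. -/
noncomputable def coinvT {n : ℕ} (f : MvPolynomial (Fin n) ℂ) : MvPolynomial (Fin n) ℂ :=
  ∑ i : Fin n, X i ^ 2 * pderiv i f

lemma coinvT_add {n : ℕ} (f g : MvPolynomial (Fin n) ℂ) :
    coinvT (f + g) = coinvT f + coinvT g := by
  simp [coinvT, mul_add, Finset.sum_add_distrib]

lemma coinvT_mul {n : ℕ} (f g : MvPolynomial (Fin n) ℂ) :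
    coinvT (f * g) = f * coinvT g + g * coinvT f := by
  simp only [coinvT, Finset.mul_sum]
  rw [← Finset.sum_add_distrib]
  refine Finset.sum_congr rfl fun i _ => ?_
  rw [pderiv_mul]
  ring

lemma coinvT_symm {n : ℕ} {q : MvPolynomial (Fin n) ℂ} (hq : q.IsSymmetric) :
    (coinvT q).IsSymmetric := by
  intro σ
  have : ∀ i : Fin n, rename (⇑σ) (X i ^ 2 * pderiv i q) = X (σ i) ^ 2 * pderiv (σ i) q := by
    intro i
    rw [map_mul, map_pow, rename_X, ← pderiv_rename σ.injective, hq σ]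
  rw [coinvT, map_sum]
  simp only [this]
  rw [← Equiv.sum_comp σ (fun j => X j ^ 2 * pderiv j q)]

lemma coinvT_constantCoeff {n : ℕ} (q : MvPolynomial (Fin n) ℂ) :
    constantCoeff (coinvT q) = 0 := by
  simp [coinvT, constantCoeff_X]

lemma coinvT_mem {n : ℕ} {f : MvPolynomial (Fin n) ℂ} (hf : f ∈ coinvIdeal n) :
    coinvT f ∈ coinvIdeal n := by
  refine Submodule.span_induction (p := fun x _ => x ∈ coinvIdeal n ∧ coinvT x ∈ coinvIdeal n)
    ?_ ?_ ?_ ?_ hf |>.2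
  · intro q hq
    exact ⟨Ideal.subset_span hq, Ideal.subset_span ⟨coinvT_symm hq.1, coinvT_constantCoeff q⟩⟩
  · constructor <;> simp [coinvT]
  · intro x y _ _ hx hy
    exact ⟨add_mem hx.1 hy.1, by rw [coinvT_add]; exact add_mem hx.2 hy.2⟩
  · intro a x _ hx
    refine ⟨Ideal.mul_mem_left _ a hx.1, ?_⟩
    have : coinvT (a * x) = a * coinvT x + x * coinvT a := coinvT_mul a x
    rw [smul_eq_mul, this]
    exact add_mem (Ideal.mul_mem_left _ _ hx.2) (Ideal.mul_mem_right _ _ hx.1)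

lemma coinvT_monomial_key {n : ℕ} (γ : Fin n →₀ ℕ) (i : Fin n) :
    C (((n : ℤ) - 1 - (i : ℕ) - (γ i : ℕ) : ℤ) : ℂ) * X i * monomial γ (1 : ℂ) =
      C (((n : ℤ) - 1 - (i : ℕ) : ℤ) : ℂ) * X i * monomial γ 1 -
        X i ^ 2 * pderiv i (monomial γ 1) := by
  have hc : (((n : ℤ) - 1 - (i : ℕ) - (γ i : ℕ) : ℤ) : ℂ)
      = (((n : ℤ) - 1 - (i : ℕ) : ℤ) : ℂ) - (γ i : ℂ) := by push_cast; ring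
  rw [hc, map_sub, sub_mul, sub_mul]
  rw [sub_right_inj]
  rw [pderiv_monomial, one_mul]
  by_cases h : γ i = 0
  · simp [h]
  · rw [X_pow_eq_monomial, monomial_mul, one_mul]
    have hX : (X i : MvPolynomial (Fin n) ℂ) = monomial (Finsupp.single i 1) 1 := by
      rw [← pow_one (X i), X_pow_eq_monomial]
    rw [hX, mul_assoc, monomial_mul, one_mul, C_mul_monomial, mul_one]
    congr 1
    congr 1
    ext j
    simp only [Finsupp.add_apply, Finsupp.tsub_apply, Finsupp.single_apply]
    by_cases hj : i = j
    · subst hj; simp; omega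
    · simp [hj]

lemma coinvT_smul {n : ℕ} (a : ℂ) (f : MvPolynomial (Fin n) ℂ) :
    coinvT (a • f) = a • coinvT f := by
  simp [coinvT, Finset.smul_sum, mul_smul_comm]

lemma key_monomial {n : ℕ} (γ : Fin n →₀ ℕ) :
    (∑ i : Fin n, C (((n : ℤ) - 1 - (i : ℕ) - (γ i : ℕ) : ℤ) : ℂ) * X i) * monomial γ (1 : ℂ) =
      (∑ i : Fin n, C (((n : ℤ) - 1 - (i : ℕ) : ℤ) : ℂ) * X i) * monomial γ 1 -
        coinvT (monomial γ 1) := by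
  rw [Finset.sum_mul, Finset.sum_mul, coinvT, ← Finset.sum_sub_distrib]
  exact Finset.sum_congr rfl fun i _ => coinvT_monomial_key γ i

lemma D_eq {n : ℕ}
    (D : MvPolynomial (Fin n) ℂ →ₗ[ℂ] MvPolynomial (Fin n) ℂ)
    (hD : ∀ γ : Fin n →₀ ℕ,
      D (monomial γ 1) =
        (∑ i : Fin n,
            C (((n : ℤ) - 1 - (i : ℕ) - (γ i : ℕ) : ℤ) : ℂ) * X i) *
          monomial γ 1)
    (f : MvPolynomial (Fin n) ℂ) :
    D f = (∑ i : Fin n, C (((n : ℤ) - 1 - (i : ℕ) : ℤ) : ℂ) * X i) * f - coinvT f := by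
  induction f using MvPolynomial.induction_on' with
  | monomial γ a =>
    have h : monomial γ a = a • monomial γ (1 : ℂ) := by
      rw [smul_monomial, smul_eq_mul, mul_one]
    rw [h, map_smul, hD γ, key_monomial γ, coinvT_smul, smul_sub]
    rw [mul_smul_comm]
  | add p q hp hq =>
    rw [map_add, hp, hq, coinvT_add]
    ring

theorem delta_maps_ideal_to_ideal {n : ℕ}
    (D : MvPolynomial (Fin n) ℂ →ₗ[ℂ] MvPolynomial (Fin n) ℂ)
    (hD : ∀ γ : Fin n →₀ ℕ,
      D (monomial γ 1) =
        (∑ i : Fin n,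
            C (((n : ℤ) - 1 - (i : ℕ) - (γ i : ℕ) : ℤ) : ℂ) * X i) *
          monomial γ 1)
    (f : MvPolynomial (Fin n) ℂ) (hf : f ∈ coinvIdeal n) :
    D f ∈ coinvIdeal n := by
  rw [D_eq D hD f]
  exact sub_mem (Ideal.mul_mem_left _ _ hf) (coinvT_mem hf)
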